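/- arXiv:1410.0502 — 4 statements merged into one kernel-verified Lean document; each statement's English description precedes it below -/
import Mathlib

section
/- If a homomorphism γ : G → U_{n+1}(F_p) from a profinite (or arbitrary) group G has the property that the n superdiagonal coordinate functions γ_{i,i+1} : G → Z/p are surjective and F_p-linearly independent as homomorphisms G → F_p, then γ is surjective. -/
/-- A square matrix is *unitriangular* if it is upper triangular with all
diagonal entries equal to `1`. -/
def Matrix.IsUnitriangular {m p : ℕ} (M : Matrix (Fin m) (Fin m) (ZMod p)) : Prop :=
  (∀ i, M i i = 1) ∧ ∀ i j, j < i → M i j = 0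

lemma Matrix.IsUnitriangular.one {m p : ℕ} :
    Matrix.IsUnitriangular (1 : Matrix (Fin m) (Fin m) (ZMod p)) := by
  constructor
  · intro i; simp
  · intro i j h; exact Matrix.one_apply_ne (ne_of_gt h)

lemma Matrix.IsUnitriangular.mul {m p : ℕ} {A B : Matrix (Fin m) (Fin m) (ZMod p)}
    (hA : A.IsUnitriangular) (hB : B.IsUnitriangular) : (A * B).IsUnitriangular := by
  constructor
  · intro i
    rw [Matrix.mul_apply]
    rw [Finset.sum_eq_single i]
    · rw [hA.1, hB.1, one_mul]
    · intro k _ hk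
      rcases lt_or_gt_of_ne hk with h | h
      · rw [hA.2 i k h, zero_mul]
      · rw [hB.2 k i h, mul_zero]
    · intro h; exact absurd (Finset.mem_univ i) h
  · intro i j hji
    rw [Matrix.mul_apply]
    apply Finset.sum_eq_zero
    intro k _
    rcases lt_or_ge k i with h | h
    · rw [hA.2 i k h, zero_mul]
    · rw [hB.2 k j (lt_of_lt_of_le hji h), mul_zero]

lemma Matrix.IsUnitriangular.pow {m p : ℕ} {A : Matrix (Fin m) (Fin m) (ZMod p)}
    (hA : A.IsUnitriangular) (k : ℕ) : (A ^ k).IsUnitriangular := by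
  induction k with
  | zero => simpa using Matrix.IsUnitriangular.one
  | succ k ih => rw [pow_succ]; exact ih.mul hA

/-- The group `U_m(𝔽_p)` of unipotent upper-triangular `m × m` matrices over `𝔽_p`,
realized as a subgroup of the units of the matrix ring. -/
def unitriangularGroup (m p : ℕ) [Fact p.Prime] :
    Subgroup (Matrix (Fin m) (Fin m) (ZMod p))ˣ where
  carrier := {u | Matrix.IsUnitriangular u.val}
  one_mem' := Matrix.IsUnitriangular.one
  mul_mem' := fun ha hb => ha.mul hb
  inv_mem' := by
    intro u hu
    have hord : 0 < orderOf u := orderOf_pos u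
    have h1 : u ^ orderOf u = 1 := pow_orderOf_eq_one u
    have hinv : u⁻¹ = u ^ (orderOf u - 1) := by
      apply inv_eq_of_mul_eq_one_right
      rw [← pow_succ', Nat.sub_add_cancel hord]
      exact h1
    show Matrix.IsUnitriangular (u⁻¹).val
    rw [hinv]
    rw [Units.val_pow_eq_pow_val]
    exact hu.pow _




namespace UniProof

/-- `M` agrees with the identity at all entries `(i,j)` with `j < i + k`. -/
def TT {m p : ℕ} (k : ℕ) (M : Matrix (Fin m) (Fin m) (ZMod p)) : Prop :=
  ∀ i j : Fin m, (j : ℕ) < (i : ℕ) + k → M i j = (1 : Matrix (Fin m) (Fin m) (ZMod p)) i j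

variable {m p : ℕ}

lemma tt_mono {k k' : ℕ} (h : k' ≤ k) {M : Matrix (Fin m) (Fin m) (ZMod p)}
    (hM : TT k M) : TT k' M := fun i j hij => hM i j (by omega)

lemma tt_one (k : ℕ) : TT k (1 : Matrix (Fin m) (Fin m) (ZMod p)) := fun _ _ _ => rfl

lemma tt_iff_unitriangular {M : Matrix (Fin m) (Fin m) (ZMod p)} :
    TT 1 M ↔ M.IsUnitriangular := by
  constructor
  · intro h
    constructor
    · intro i; rw [h i i (by omega)]; simp [Matrix.one_apply]
    · intro i j hji
      rw [h i j (by have := Fin.lt_iff_val_lt_val.mp hji; omega)]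
      exact Matrix.one_apply_ne (ne_of_gt hji)
  · intro h i j hij
    rcases lt_trichotomy j i with hc | hc | hc
    · rw [h.2 i j hc, Matrix.one_apply_ne (ne_of_gt hc)]
    · subst hc; rw [h.1, Matrix.one_apply_eq]
    · exfalso; rw [Fin.lt_iff_val_lt_val] at hc; omega

lemma sum_two {α : Type*} [AddCommMonoid α] (f : Fin m → α) (a b : Fin m)
    (hab : a ≠ b) (h : ∀ x, x ≠ a → x ≠ b → f x = 0) :
    ∑ x, f x = f a + f b := by
  have : ∑ x, f x = ∑ x ∈ ({a, b} : Finset (Fin m)), f x := by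
    refine (Finset.sum_subset (Finset.subset_univ _) ?_).symm
    intro x _ hx
    simp only [Finset.mem_insert, Finset.mem_singleton, not_or] at hx
    exact h x hx.1 hx.2
  rw [this, Finset.sum_insert (by simpa using hab), Finset.sum_singleton]

lemma sum_three {α : Type*} [AddCommMonoid α] (f : Fin m → α) (a b c : Fin m)
    (hab : a ≠ b) (hac : a ≠ c) (hbc : b ≠ c) (h : ∀ x, x ≠ a → x ≠ b → x ≠ c → f x = 0) :
    ∑ x, f x = f a + f b + f c := by
  have : ∑ x, f x = ∑ x ∈ ({a, b, c} : Finset (Fin m)), f x := by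
    refine (Finset.sum_subset (Finset.subset_univ _) ?_).symm
    intro x _ hx
    simp only [Finset.mem_insert, Finset.mem_singleton, not_or] at hx
    exact h x hx.1 hx.2.1 hx.2.2
  rw [this, Finset.sum_insert (by simp [hab, hac]), Finset.sum_insert (by simpa using hbc),
    Finset.sum_singleton, add_assoc]

/-- If `A` is trivial up to gap `k` and `B` is unitriangular, the entry of `A*B` at
gap exactly sandwiched is the sum. -/
lemma mul_apply_of_tt_left {k : ℕ} {A B : Matrix (Fin m) (Fin m) (ZMod p)}
    (hA : TT k A) (hB : TT 1 B) {i j : Fin m} (h1 : (i : ℕ) < j) (h2 : (j : ℕ) ≤ i + k) :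
    (A * B) i j = A i j + B i j := by
  rw [Matrix.mul_apply]
  have hij : i ≠ j := fun h => by subst h; omega
  rw [sum_two (fun x => A i x * B x j) i j hij]
  · rw [hA i i (by omega), hB j j (by omega), Matrix.one_apply_eq, Matrix.one_apply_eq,
      one_mul, mul_one, add_comm]
  · intro x hxi hxj
    rcases lt_or_ge (x : ℕ) ((i : ℕ) + k) with hc | hc
    · rw [hA i x hc, Matrix.one_apply_ne (fun h => hxi h.symm), zero_mul]
    · have : (j : ℕ) < (x : ℕ) + 1 := by omega
      rw [hB x j this, Matrix.one_apply_ne hxj, mul_zero]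

lemma mul_apply_of_tt_right {k : ℕ} {A B : Matrix (Fin m) (Fin m) (ZMod p)}
    (hA : TT 1 A) (hB : TT k B) {i j : Fin m} (h1 : (i : ℕ) < j) (h2 : (j : ℕ) ≤ i + k) :
    (A * B) i j = A i j + B i j := by
  rw [Matrix.mul_apply]
  have hij : i ≠ j := fun h => by subst h; omega
  rw [sum_two (fun x => A i x * B x j) i j hij]
  · rw [hA i i (by omega), hB j j (by omega), Matrix.one_apply_eq, Matrix.one_apply_eq,
      one_mul, mul_one, add_comm]
  · intro x hxi hxj
    rcases lt_or_ge (j : ℕ) ((x : ℕ) + k) with hc | hc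
    · rw [hB x j hc, Matrix.one_apply_ne hxj, mul_zero]
    · have : (x : ℕ) < (i : ℕ) + 1 := by omega
      rw [hA i x this, Matrix.one_apply_ne (fun h => hxi h.symm), zero_mul]

lemma tt_mul {k : ℕ} (hk : 1 ≤ k) {A B : Matrix (Fin m) (Fin m) (ZMod p)}
    (hA : TT k A) (hB : TT k B) : TT k (A * B) := by
  intro i j hij
  rcases lt_trichotomy (j : ℕ) (i : ℕ) with hc | hc | hc
  · rw [Matrix.one_apply_ne (fun h => by rw [h] at hc; omega)]
    rw [Matrix.mul_apply]
    apply Finset.sum_eq_zero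
    intro x _
    rcases lt_or_ge (x : ℕ) (i : ℕ) with hd | hd
    · rw [hA i x (by omega), Matrix.one_apply_ne (by intro h; rw [h] at hd; omega), zero_mul]
    · rw [hB x j (by omega), Matrix.one_apply_ne (by intro h; rw [← h] at hc; omega), mul_zero]
  · have : i = j := Fin.ext hc.symm
    subst this
    rw [Matrix.one_apply_eq, Matrix.mul_apply]
    rw [Finset.sum_eq_single i]
    · rw [hA i i (by omega), hB i i (by omega), Matrix.one_apply_eq, one_mul]
    · intro x _ hx
      rcases lt_or_ge (x : ℕ) (i : ℕ) with hd | hd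
      · rw [hA i x (by omega), Matrix.one_apply_ne (fun h => hx h.symm), zero_mul]
      · rw [hB x i (by omega), Matrix.one_apply_ne hx, mul_zero]
    · intro h; exact absurd (Finset.mem_univ i) h
  · rw [mul_apply_of_tt_left hA (tt_mono hk hB) hc (by omega),
      hA i j hij, hB i j hij, Matrix.one_apply_ne (fun h => by rw [h] at hc; omega)]
    simp




variable {m p : ℕ}

lemma tt_of_mem [Fact p.Prime] {u : (Matrix (Fin m) (Fin m) (ZMod p))ˣ}
    (h : u ∈ unitriangularGroup m p) : TT 1 u.val :=
  tt_iff_unitriangular.mpr h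

/-- If two unitriangular units agree at all entries of gap `< k`, then `A * B⁻¹` is trivial
up to gap `k`. -/
lemma tt_mul_inv [Fact p.Prime] (k : ℕ) {A B : (Matrix (Fin m) (Fin m) (ZMod p))ˣ}
    (hA : A ∈ unitriangularGroup m p) (hB : B ∈ unitriangularGroup m p)
    (hagree : ∀ i j : Fin m, (j : ℕ) < (i : ℕ) + k → A.val i j = B.val i j) :
    TT k ((A * B⁻¹).val) := by
  induction k with
  | zero =>
      exact tt_mono (by omega)
        (tt_of_mem (Subgroup.mul_mem _ hA (Subgroup.inv_mem _ hB)))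
  | succ k ih =>
      have hC : TT k ((A * B⁻¹).val) := ih fun i j h => hagree i j (by omega)
      intro i j hij
      rcases Nat.lt_or_ge (j : ℕ) ((i : ℕ) + k) with h | h
      · exact hC i j h
      have hjk : (j : ℕ) = (i : ℕ) + k := by omega
      rcases Nat.eq_zero_or_pos k with hk0 | hk
      · have hijeq : i = j := Fin.ext (by omega)
        subst hijeq
        exact tt_of_mem (Subgroup.mul_mem _ hA (Subgroup.inv_mem _ hB)) i i (by omega)
      · have h1 : (i : ℕ) < j := by omega
        have hij' : i ≠ j := fun h' => by rw [h'] at h1; omega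
        have key : A.val i j = (A * B⁻¹).val i j + B.val i j := by
          have e : A = (A * B⁻¹) * B := by group
          calc A.val i j = ((A * B⁻¹) * B).val i j := by rw [← e]
            _ = (A * B⁻¹).val i j + B.val i j := by
                rw [Units.val_mul]
                exact mul_apply_of_tt_left hC (tt_of_mem hB) h1 (le_of_eq hjk)
        rw [hagree i j (by omega)] at key
        rw [Matrix.one_apply_ne hij']
        exact (right_eq_add.mp key)


end UniProof

open UniProof in
/-- If a homomorphism `γ : G → U_{n+1}(𝔽_p)` has the property that the
`n` superdiagonal coordinate functions `γ_{i,i+1} : G → ℤ/p` are surjective and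
`𝔽_p`-linearly independent as homomorphisms `G → 𝔽_p`, then `γ` is surjective. -/
theorem surjective_of_superdiagonal (p n : ℕ) [Fact p.Prime] (hn : 2 ≤ n)
    (G : Type*) [Group G] (γ : G →* unitriangularGroup (n + 1) p)
    (hsurj : ∀ i : Fin n, Function.Surjective
      (fun σ : G => ((γ σ : (Matrix (Fin (n + 1)) (Fin (n + 1)) (ZMod p))ˣ) :
        Matrix (Fin (n + 1)) (Fin (n + 1)) (ZMod p)) i.castSucc i.succ))
    (hli : LinearIndependent (ZMod p) (fun i : Fin n =>
      (fun σ : G => ((γ σ : (Matrix (Fin (n + 1)) (Fin (n + 1)) (ZMod p))ˣ) :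
        Matrix (Fin (n + 1)) (Fin (n + 1)) (ZMod p)) i.castSucc i.succ : G → ZMod p))) :
    Function.Surjective γ := by
  classical
  set R := ZMod p
  -- the matrix of γ σ
  set E : G → Matrix (Fin (n+1)) (Fin (n+1)) R :=
    fun σ => ((γ σ : (Matrix (Fin (n + 1)) (Fin (n + 1)) R)ˣ) :
      Matrix (Fin (n + 1)) (Fin (n + 1)) R) with hE_def
  have hmem : ∀ σ : G, (γ σ : (Matrix (Fin (n + 1)) (Fin (n + 1)) R)ˣ) ∈
      unitriangularGroup (n+1) p := fun σ => (γ σ).2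
  have htt : ∀ σ : G, TT 1 (E σ) := fun σ => tt_of_mem (hmem σ)
  -- additivity of superdiagonal entries
  have hadd : ∀ (σ τ : G) (i j : Fin (n+1)), (j : ℕ) = (i : ℕ) + 1 →
      E (σ * τ) i j = E σ i j + E τ i j := by
    intro σ τ i j hij
    have : E (σ * τ) = E σ * E τ := by
      simp only [hE_def, map_mul, Subgroup.coe_mul, Units.val_mul]
    rw [this]
    exact mul_apply_of_tt_left (htt σ) (htt τ) (by omega) (le_of_eq hij)
  have hE1 : E 1 = 1 := by simp [hE_def]
  -- the combined superdiagonal map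
  set f : G → (Fin n → R) := fun σ i => E σ i.castSucc i.succ with hf_def
  have hfadd : ∀ σ τ : G, f (σ * τ) = f σ + f τ := by
    intro σ τ
    funext i
    exact hadd σ τ i.castSucc i.succ (by simp)
  have hf1 : f 1 = 0 := by
    funext i
    simp only [hf_def, hE1]
    exact Matrix.one_apply_ne (by simp [Fin.ext_iff])
  -- the range of f is an additive subgroup
  set W : AddSubgroup (Fin n → R) :=
    { carrier := Set.range f
      zero_mem' := ⟨1, hf1⟩
      add_mem' := by
        rintro a b ⟨σ, rfl⟩ ⟨τ, rfl⟩
        exact ⟨σ * τ, hfadd σ τ⟩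
      neg_mem' := by
        rintro a ⟨σ, rfl⟩
        refine ⟨σ⁻¹, ?_⟩
        have := hfadd σ σ⁻¹
        rw [mul_inv_cancel, hf1] at this
        exact (neg_eq_of_add_eq_zero_right this.symm).symm } with hW_def
  -- linear independence forces the range to be everything
  have hWtop : ∀ v : Fin n → R, ∃ σ : G, f σ = v := by
    intro v
    by_contra hv
    push_neg at hv
    set Wsub : Submodule R (Fin n → R) := AddSubgroup.toZModSubmodule p W with hWsub_def
    have hvW : v ∉ Wsub := by
      intro hmem'
      obtain ⟨σ, hσ⟩ := hmem'
      exact hv σ hσ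
    -- find a functional vanishing on Wsub but not at v
    have hq : Submodule.Quotient.mk (p := Wsub) v ≠ 0 := by
      rw [Ne, Submodule.Quotient.mk_eq_zero]
      exact hvW
    have := (Module.forall_dual_apply_eq_zero_iff R (Submodule.Quotient.mk (p := Wsub) v)).not
    rw [iff_iff_implies_and_implies] at this
    have hex : ¬ ∀ φ : Module.Dual R ((Fin n → R) ⧸ Wsub),
        φ (Submodule.Quotient.mk v) = 0 := by
      intro hall
      exact hq ((Module.forall_dual_apply_eq_zero_iff R _).mp hall)
    push_neg at hex
    obtain ⟨φ, hφ⟩ := hex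
    set F : (Fin n → R) →ₗ[R] R := φ.comp Wsub.mkQ with hF_def
    have hFW : ∀ σ : G, F (f σ) = 0 := by
      intro σ
      have hmem' : f σ ∈ Wsub := ⟨σ, rfl⟩
      simp only [hF_def, LinearMap.comp_apply, Submodule.mkQ_apply]
      rw [(Submodule.Quotient.mk_eq_zero _).mpr hmem', map_zero]
    set c : Fin n → R := fun i => F (fun j => if i = j then 1 else 0) with hc_def
    have hsum : ∀ σ : G, ∑ i, c i * f σ i = 0 := by
      intro σ
      have h2 := (LinearMap.pi_apply_eq_sum_univ F (f σ)).symm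
      rw [hFW σ] at h2
      rw [← h2]
      refine Finset.sum_congr rfl fun i _ => ?_
      rw [smul_eq_mul, mul_comm]
    have hc0 : ∀ i, c i = 0 := by
      refine Fintype.linearIndependent_iff.mp hli c ?_
      funext σ
      have := hsum σ
      simpa [Finset.sum_apply, Pi.smul_apply, smul_eq_mul] using this
    have hFv : F v = 0 := by
      rw [LinearMap.pi_apply_eq_sum_univ F v]
      refine Finset.sum_eq_zero fun i _ => ?_
      have : F (fun j => if i = j then 1 else 0) = c i := rfl
      rw [this, hc0 i, smul_zero]
    exact hφ (by simpa [hF_def] using hFv)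
  -- entrywise version of combined surjectivity
  have hcomb : ∀ v : Fin (n+1) → R, ∃ σ : G, ∀ i j : Fin (n+1), (j : ℕ) = (i : ℕ) + 1 →
      E σ i j = v i := by
    intro v
    obtain ⟨σ, hσ⟩ := hWtop fun i => v i.castSucc
    refine ⟨σ, fun i j hij => ?_⟩
    have hi : (i : ℕ) < n := by have := j.isLt; omega
    have h1 : (⟨(i : ℕ), hi⟩ : Fin n).castSucc = i := by simp [Fin.ext_iff]
    have h2 : (⟨(i : ℕ), hi⟩ : Fin n).succ = j := by simp [Fin.ext_iff]; omega
    have := congrFun hσ ⟨(i : ℕ), hi⟩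
    simp only [hf_def] at this
    rw [h1, h2] at this
    exact this
  -- elements of the range with a single prescribed entry at gap k
  have hE2 : ∀ k : ℕ, 1 ≤ k → ∀ (i₀ : ℕ) (c : R), ∃ u : unitriangularGroup (n+1) p,
      u ∈ γ.range ∧ TT k ((u : (Matrix (Fin (n+1)) (Fin (n+1)) R)ˣ) :
        Matrix (Fin (n+1)) (Fin (n+1)) R) ∧
      ∀ i j : Fin (n+1), (j : ℕ) = (i : ℕ) + k →
        ((u : (Matrix (Fin (n+1)) (Fin (n+1)) R)ˣ) : Matrix (Fin (n+1)) (Fin (n+1)) R) i j =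
          if (i : ℕ) = i₀ then c else 0 := by
    intro k hk
    induction k, hk using Nat.le_induction with
    | base =>
        intro i₀ c
        obtain ⟨σ, hσ⟩ := hcomb fun i => if (i : ℕ) = i₀ then c else 0
        exact ⟨γ σ, ⟨σ, rfl⟩, htt σ, hσ⟩
    | succ k hk ih =>
        intro i₀ c
        obtain ⟨σ, hσ⟩ := hcomb fun i => if (i : ℕ) = i₀ then c else 0
        obtain ⟨w, hwr, hwtt, hwe⟩ := ih (i₀ + 1) 1
        set Xu : (Matrix (Fin (n+1)) (Fin (n+1)) R)ˣ := ↑(γ σ) with hXu_def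
        set Wu : (Matrix (Fin (n+1)) (Fin (n+1)) R)ˣ := ↑w with hWu_def
        have hXmem : Xu ∈ unitriangularGroup (n+1) p := (γ σ).2
        have hWmem : Wu ∈ unitriangularGroup (n+1) p := w.2
        have hXtt : TT 1 Xu.val := tt_of_mem hXmem
        have hWtt : TT k Wu.val := hwtt
        refine ⟨γ σ * w * (γ σ)⁻¹ * w⁻¹, ?_, ?_, ?_⟩
        · exact Subgroup.mul_mem _ (Subgroup.mul_mem _ (Subgroup.mul_mem _ ⟨σ, rfl⟩ hwr)
            (Subgroup.inv_mem _ ⟨σ, rfl⟩)) (Subgroup.inv_mem _ hwr)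
        all_goals {
        have huval : ((γ σ * w * (γ σ)⁻¹ * w⁻¹ : unitriangularGroup (n+1) p) :
            (Matrix (Fin (n+1)) (Fin (n+1)) R)ˣ) = (Xu * Wu) * (Wu * Xu)⁻¹ := by
          rw [hXu_def, hWu_def]
          push_cast
          group
        have hagree : ∀ i j : Fin (n+1), (j : ℕ) < (i : ℕ) + (k+1) →
            (Xu * Wu).val i j = (Wu * Xu).val i j := by
          intro i j h
          rcases Nat.lt_or_ge (i : ℕ) (j : ℕ) with h1 | h1
          · rw [Units.val_mul, Units.val_mul,
              mul_apply_of_tt_right hXtt hWtt h1 (by omega),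
              mul_apply_of_tt_left hWtt hXtt h1 (by omega), add_comm]
          · rw [tt_of_mem (Subgroup.mul_mem _ hXmem hWmem) i j (by omega),
              tt_of_mem (Subgroup.mul_mem _ hWmem hXmem) i j (by omega)]
        have hCtt : TT (k+1) (((Xu * Wu) * (Wu * Xu)⁻¹).val) :=
          tt_mul_inv (k+1) (Subgroup.mul_mem _ hXmem hWmem)
            (Subgroup.mul_mem _ hWmem hXmem) hagree
        first
        | { rw [huval]; exact hCtt }
        | { intro i j hij
            have hin : (i : ℕ) + (k+1) ≤ n := by have := j.isLt; omega
            obtain ⟨i1, hi1⟩ : ∃ i1 : Fin (n+1), (i1 : ℕ) = (i : ℕ) + 1 :=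
              ⟨⟨(i : ℕ) + 1, by omega⟩, rfl⟩
            obtain ⟨j1, hj1⟩ : ∃ j1 : Fin (n+1), (j1 : ℕ) = (i : ℕ) + k :=
              ⟨⟨(i : ℕ) + k, by omega⟩, rfl⟩
            have h1 : (i : ℕ) < (j : ℕ) := by omega
            have hXW : (Xu * Wu).val i j =
                Wu.val i j + (if (i : ℕ) = i₀ then c else 0) + Xu.val i j := by
              rw [Units.val_mul, Matrix.mul_apply]
              rw [sum_three (fun x' => Xu.val i x' * Wu.val x' j) i i1 j
                (fun h => by rw [h] at hi1; omega) (fun h => by rw [h] at h1; omega)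
                (fun h => by rw [h] at hi1; omega) ?_]
              · show Xu.val i i * Wu.val i j + Xu.val i i1 * Wu.val i1 j
                  + Xu.val i j * Wu.val j j = _
                have t1 : Xu.val i i = 1 := by
                  rw [hXtt i i (by omega), Matrix.one_apply_eq]
                have t2 : Xu.val i i1 = if (i : ℕ) = i₀ then c else 0 := hσ i i1 hi1
                have t3 : Wu.val i1 j = if (i1 : ℕ) = i₀ + 1 then 1 else 0 :=
                  hwe i1 j (by omega)
                have t4 : Wu.val j j = 1 := by
                  rw [hWtt j j (by omega), Matrix.one_apply_eq]
                rw [t1, t2, t3, t4, one_mul, mul_one, hi1]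
                congr 1
                congr 1
                by_cases hcase : (i : ℕ) = i₀
                · rw [if_pos hcase, if_pos (by omega), mul_one]
                · rw [if_neg hcase, zero_mul]
              · intro x' hx1 hx2 hx3
                show Xu.val i x' * Wu.val x' j = 0
                rcases Nat.lt_or_ge (x' : ℕ) ((i : ℕ) + 1) with hc | hc
                · rw [hXtt i x' hc, Matrix.one_apply_ne (fun h => hx1 h.symm), zero_mul]
                · have : (x' : ℕ) ≠ (i : ℕ) + 1 := fun h => hx2 (Fin.ext (by omega))
                  rw [hWtt x' j (by omega), Matrix.one_apply_ne hx3, mul_zero]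
            have hWX : (Wu * Xu).val i j = Xu.val i j + 0 + Wu.val i j := by
              rw [Units.val_mul, Matrix.mul_apply]
              rw [sum_three (fun x' => Wu.val i x' * Xu.val x' j) i j1 j
                (fun h => by rw [h] at hj1; omega) (fun h => by rw [h] at h1; omega)
                (fun h => by rw [h] at hj1; omega) ?_]
              · show Wu.val i i * Xu.val i j + Wu.val i j1 * Xu.val j1 j
                  + Wu.val i j * Xu.val j j = _
                have t1 : Wu.val i i = 1 := by
                  rw [hWtt i i (by omega), Matrix.one_apply_eq]
                have t2 : Wu.val i j1 = if (i : ℕ) = i₀ + 1 then 1 else 0 :=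
                  hwe i j1 (by omega)
                have t3 : Xu.val j1 j = if (j1 : ℕ) = i₀ then c else 0 := hσ j1 j (by omega)
                have t4 : Xu.val j j = 1 := by
                  rw [hXtt j j (by omega), Matrix.one_apply_eq]
                rw [t1, t2, t3, t4, one_mul, mul_one]
                congr 1
                congr 1
                by_cases hcase : (i : ℕ) = i₀ + 1
                · rw [if_pos hcase, if_neg (by omega), mul_zero]
                · rw [if_neg hcase, zero_mul]
              · intro x' hx1 hx2 hx3
                show Wu.val i x' * Xu.val x' j = 0
                rcases Nat.lt_or_ge (x' : ℕ) ((i : ℕ) + k) with hc | hc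
                · rw [hWtt i x' hc, Matrix.one_apply_ne (fun h => hx1 h.symm), zero_mul]
                · have : (x' : ℕ) ≠ (i : ℕ) + k := fun h => hx2 (Fin.ext (by omega))
                  rw [hXtt x' j (by omega), Matrix.one_apply_ne hx3, mul_zero]
            have key : (Xu * Wu).val i j =
                ((Xu * Wu) * (Wu * Xu)⁻¹).val i j + (Wu * Xu).val i j := by
              have e : Xu * Wu = ((Xu * Wu) * (Wu * Xu)⁻¹) * (Wu * Xu) := by group
              calc (Xu * Wu).val i j = (((Xu * Wu) * (Wu * Xu)⁻¹) * (Wu * Xu)).val i j := by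
                    rw [← e]
                _ = _ := by
                    rw [Units.val_mul ((Xu * Wu) * (Wu * Xu)⁻¹)]
                    exact mul_apply_of_tt_left hCtt
                      (tt_of_mem (Subgroup.mul_mem _ hWmem hXmem)) h1 (by omega)
            rw [huval]
            have : ((Xu * Wu) * (Wu * Xu)⁻¹).val i j =
                (Xu * Wu).val i j - (Wu * Xu).val i j := by rw [key]; ring
            rw [this, hXW, hWX]
            ring }
        }
  -- elements of the range with fully prescribed gap-k entries
  have hE' : ∀ k : ℕ, 1 ≤ k → ∀ v : Fin (n+1) → R, ∃ u : unitriangularGroup (n+1) p,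
      u ∈ γ.range ∧ TT k ((u : (Matrix (Fin (n+1)) (Fin (n+1)) R)ˣ) :
        Matrix (Fin (n+1)) (Fin (n+1)) R) ∧
      ∀ i j : Fin (n+1), (j : ℕ) = (i : ℕ) + k →
        ((u : (Matrix (Fin (n+1)) (Fin (n+1)) R)ˣ) : Matrix (Fin (n+1)) (Fin (n+1)) R) i j
          = v i := by
    intro k hk v
    have main : ∀ t : Finset (Fin (n+1)), ∃ u : unitriangularGroup (n+1) p,
        u ∈ γ.range ∧ TT k ((u : (Matrix (Fin (n+1)) (Fin (n+1)) R)ˣ) :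
          Matrix (Fin (n+1)) (Fin (n+1)) R) ∧
        ∀ i j : Fin (n+1), (j : ℕ) = (i : ℕ) + k →
          ((u : (Matrix (Fin (n+1)) (Fin (n+1)) R)ˣ) : Matrix (Fin (n+1)) (Fin (n+1)) R) i j
            = if i ∈ t then v i else 0 := by
      intro t
      induction t using Finset.induction_on with
      | empty =>
          refine ⟨1, Subgroup.one_mem _, ?_, ?_⟩
          · simpa using tt_one k
          · intro i j hij
            simp only [Finset.notMem_empty, if_false]
            show ((1 : (Matrix (Fin (n+1)) (Fin (n+1)) R)ˣ) :
              Matrix (Fin (n+1)) (Fin (n+1)) R) i j = 0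
            rw [Units.val_one]
            exact Matrix.one_apply_ne fun h => by rw [h] at hij; omega
      | @insert a t ha iht =>
          obtain ⟨u₀, hr₀, htt₀, he₀⟩ := iht
          obtain ⟨e, hre, htte, hee⟩ := hE2 k hk (a : ℕ) (v a)
          refine ⟨e * u₀, Subgroup.mul_mem _ hre hr₀, ?_, ?_⟩
          · show TT k (((e : (Matrix (Fin (n+1)) (Fin (n+1)) R)ˣ) *
              (u₀ : (Matrix (Fin (n+1)) (Fin (n+1)) R)ˣ)).val)
            rw [Units.val_mul]
            exact tt_mul hk htte htt₀
          · intro i j hij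
            have : ((↑(e * u₀) : (Matrix (Fin (n+1)) (Fin (n+1)) R)ˣ) :
                Matrix (Fin (n+1)) (Fin (n+1)) R) =
                ((e : (Matrix (Fin (n+1)) (Fin (n+1)) R)ˣ) :
                  Matrix (Fin (n+1)) (Fin (n+1)) R) *
                ((u₀ : (Matrix (Fin (n+1)) (Fin (n+1)) R)ˣ) :
                  Matrix (Fin (n+1)) (Fin (n+1)) R) := by
              push_cast
              rfl
            rw [this, mul_apply_of_tt_left htte (tt_mono hk htt₀) (by omega) (by omega),
              hee i j hij, he₀ i j hij]
            by_cases hcase : i = a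
            · subst hcase
              rw [if_pos rfl, if_pos (Finset.mem_insert_self _ _), if_neg ha, add_zero]
            · rw [if_neg (fun h => hcase (Fin.ext h)), zero_add]
              by_cases hc2 : i ∈ t
              · rw [if_pos hc2, if_pos (Finset.mem_insert_of_mem hc2)]
              · rw [if_neg hc2, if_neg (by simp [Finset.mem_insert, hcase, hc2])]
    obtain ⟨u, hr, htt', he⟩ := main Finset.univ
    exact ⟨u, hr, htt', fun i j hij => by simpa using he i j hij⟩
  -- main downward induction
  have hkey : ∀ d : ℕ, d ≤ n → ∀ u : unitriangularGroup (n+1) p,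
      TT (n + 1 - d) ((u : (Matrix (Fin (n+1)) (Fin (n+1)) R)ˣ) :
        Matrix (Fin (n+1)) (Fin (n+1)) R) → u ∈ γ.range := by
    intro d
    induction d with
    | zero =>
        intro _ u hu
        have : u = 1 := by
          apply Subtype.ext
          apply Units.ext
          funext i j
          show ((u : (Matrix (Fin (n+1)) (Fin (n+1)) R)ˣ) :
            Matrix (Fin (n+1)) (Fin (n+1)) R) i j = _
          rw [hu i j (by have := j.isLt; omega)]
          rfl
        rw [this]
        exact Subgroup.one_mem _
    | succ d ihd =>
        intro hd u hu
        set k := n - d with hk_def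
        have hk1 : 1 ≤ k := by omega
        obtain ⟨s, hrs, htts, hes⟩ := hE' k hk1
          (fun i => if h : (i : ℕ) + k ≤ n then
            ((u : (Matrix (Fin (n+1)) (Fin (n+1)) R)ˣ) :
              Matrix (Fin (n+1)) (Fin (n+1)) R) i ⟨(i : ℕ) + k, by omega⟩ else 0)
        have hutt : TT k ((u : (Matrix (Fin (n+1)) (Fin (n+1)) R)ˣ) :
            Matrix (Fin (n+1)) (Fin (n+1)) R) := by
          have : n + 1 - (d + 1) = k := by omega
          rw [← this]
          exact hu
        have hagree : ∀ i j : Fin (n+1), (j : ℕ) < (i : ℕ) + (k + 1) →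
            ((u : (Matrix (Fin (n+1)) (Fin (n+1)) R)ˣ) :
              Matrix (Fin (n+1)) (Fin (n+1)) R) i j =
            ((s : (Matrix (Fin (n+1)) (Fin (n+1)) R)ˣ) :
              Matrix (Fin (n+1)) (Fin (n+1)) R) i j := by
          intro i j h
          rcases Nat.lt_or_ge (j : ℕ) ((i : ℕ) + k) with hc | hc
          · rw [hutt i j hc, htts i j hc]
          · have hjk : (j : ℕ) = (i : ℕ) + k := by omega
            rw [hes i j hjk]
            have hle : (i : ℕ) + k ≤ n := by have := j.isLt; omega
            rw [dif_pos hle]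
            have hja : (⟨(i : ℕ) + k, by omega⟩ : Fin (n+1)) = j := Fin.ext hjk.symm
            rw [hja]
        have hCtt : TT (k + 1)
            (((u : (Matrix (Fin (n+1)) (Fin (n+1)) R)ˣ) *
              ((s : (Matrix (Fin (n+1)) (Fin (n+1)) R)ˣ))⁻¹).val) :=
          tt_mul_inv (k + 1) u.2 s.2 hagree
        have hmem2 : u * s⁻¹ ∈ γ.range := by
          apply ihd (by omega)
          have hck : n + 1 - d = k + 1 := by omega
          rw [hck]
          have : ((↑(u * s⁻¹) : (Matrix (Fin (n+1)) (Fin (n+1)) R)ˣ)) =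
              (u : (Matrix (Fin (n+1)) (Fin (n+1)) R)ˣ) *
              ((s : (Matrix (Fin (n+1)) (Fin (n+1)) R)ˣ))⁻¹ := by
            push_cast
            rfl
          show TT (k+1) ((↑(u * s⁻¹) : (Matrix (Fin (n+1)) (Fin (n+1)) R)ˣ) :
            Matrix (Fin (n+1)) (Fin (n+1)) R)
          rw [this]
          exact hCtt
        have : u = (u * s⁻¹) * s := by group
        rw [this]
        exact Subgroup.mul_mem _ hmem2 hrs
  -- conclusion
  intro u
  have hu : u ∈ γ.range := by
    apply hkey n le_rfl u
    have : n + 1 - n = 1 := by omega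
    rw [this]
    exact tt_of_mem u.2
  exact hu
end

section
/- Let G be a profinite group and χ_1, …, χ_r, μ_1, …, μ_s ∈ H^1(G, Z/p) with ∩_i ker(χ_i) = ∩_j ker(μ_j). Then Σ_{i=1}^r χ_i ∪ H^1(G, Z/p) = Σ_{j=1}^s μ_j ∪ H^1(G, Z/p) as subgroups of H^2(G, Z/p); consequently, the cup product–restriction property (exactness of H^1(G)^{⊗r} → H^2(G) → H^2(K)) holds for χ_1,…,χ_r if and only if it holds for μ_1,…,μ_s. -/
section ContinuousCochains

variable (p : ℕ) (G : Type*) [Group G] [TopologicalSpace G] [IsTopologicalGroup G]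

/-- Continuous (= locally constant) 1-cochains on `G` with values in `ℤ/p`
(trivial action). -/
abbrev Cochain1 := LocallyConstant G (ZMod p)

/-- Continuous (= locally constant) 2-cochains on `G` with values in `ℤ/p`
(trivial action). -/
abbrev Cochain2 := LocallyConstant (G × G) (ZMod p)

variable {G}

/-- A continuous 1-cochain is a 1-cocycle (for the trivial action) iff it is a
group homomorphism `G → ℤ/p`. -/
def IsHom1 (χ : Cochain1 p G) : Prop := ∀ g h : G, χ (g * h) = χ g + χ h

/-- The 2-cocycle condition (trivial action, inhomogeneous cochains). -/
def IsCocycle2 (f : Cochain2 p G) : Prop :=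
  ∀ g h k : G, f (h, k) - f (g * h, k) + f (g, h * k) - f (g, h) = 0

/-- The differential `∂ : C¹ → C²`, `(∂c)(σ, τ) = c σ − c (στ) + c τ`. -/
def d1 (c : Cochain1 p G) : Cochain2 p G :=
  c.comap ⟨Prod.fst, continuous_fst⟩ - c.comap ⟨fun x : G × G => x.1 * x.2, continuous_mul⟩
    + c.comap ⟨Prod.snd, continuous_snd⟩

/-- The cup product of two continuous 1-cochains:
`(χ ⌣ φ)(σ, τ) = χ σ · φ τ`. -/
def cup (χ φ : Cochain1 p G) : Cochain2 p G :=
  χ.comap ⟨Prod.fst, continuous_fst⟩ * φ.comap ⟨Prod.snd, continuous_snd⟩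

/-- Restriction of a continuous 2-cochain to a (closed) subgroup `K ≤ G`. -/
def res2 (K : Subgroup G) (f : Cochain2 p G) : Cochain2 p K :=
  f.comap ⟨fun x : K × K => ((x.1 : G), (x.2 : G)),
    (continuous_subtype_val.comp continuous_fst).prodMk
      (continuous_subtype_val.comp continuous_snd)⟩

/-- The kernel of a continuous homomorphism `χ : G → ℤ/p`, as a subgroup of `G`. -/
def homKer (χ : Cochain1 p G) (hχ : IsHom1 p χ) : Subgroup G where
  carrier := {g | χ g = 0}
  one_mem' := by
    have h := hχ 1 1
    rw [mul_one] at h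
    exact (left_eq_add.mp h)
  mul_mem' := by
    intro a b ha hb
    have : χ (a * b) = χ a + χ b := hχ a b
    simp only [Set.mem_setOf_eq] at ha hb ⊢
    rw [this, ha, hb, add_zero]
  inv_mem' := by
    intro a ha
    simp only [Set.mem_setOf_eq] at ha ⊢
    have h1 : χ 1 = 0 := by
      have h := hχ 1 1
      rw [mul_one] at h
      exact (left_eq_add.mp h)
    have h := hχ a a⁻¹
    rw [mul_inv_cancel, h1, ha, zero_add] at h
    exact h.symm

end ContinuousCochains

section CupRes

variable (p : ℕ) {G : Type*} [Group G] [TopologicalSpace G] [IsTopologicalGroup G]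

/-- The *cup product–restriction property* for continuous characters
`χ₁, …, χᵣ : G → ℤ/p` with respect to a subgroup `K`: the sequence
`H¹(G)^{⊗r} → H²(G) → H²(K)` is exact, expressed at the level of continuous
cocycles. -/
def CupResProperty (r : ℕ) (χ : Fin r → Cochain1 p G) (K : Subgroup G) : Prop :=
  ∀ α : Cochain2 p G, IsCocycle2 p α →
    ((∃ b : Cochain1 p K, res2 p K α = d1 p b) ↔
      ∃ φ : Fin r → Cochain1 p G, (∀ i, IsHom1 p (φ i)) ∧
        ∃ b : Cochain1 p G, α = (∑ i, cup p (χ i) (φ i)) + d1 p b)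

end CupRes

set_option linter.unusedSectionVars false

section Aux
variable {p : ℕ} [Fact p.Prime] {G : Type*} [Group G] [TopologicalSpace G] [IsTopologicalGroup G]

lemma lc_sum_apply {X Y : Type*} [TopologicalSpace X] [AddCommMonoid Y] {ι : Type*}
    (s : Finset ι) (f : ι → LocallyConstant X Y) (x : X) :
    (∑ i ∈ s, f i) x = ∑ i ∈ s, f i x := by
  change LocallyConstant.coeFnAddMonoidHom (∑ i ∈ s, f i) x = _
  rw [map_sum]
  simp [LocallyConstant.coeFnAddMonoidHom, Finset.sum_apply]
  rfl

lemma hom1_one {χ : Cochain1 p G} (hχ : IsHom1 p χ) : χ 1 = 0 := by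
  have h := hχ 1 1; rw [mul_one] at h; exact (left_eq_add.mp h)

lemma hom1_inv {χ : Cochain1 p G} (hχ : IsHom1 p χ) (g : G) : χ g⁻¹ = -χ g := by
  have h := hχ g g⁻¹; rw [mul_inv_cancel, hom1_one hχ] at h; linear_combination -h

/-- A continuous character vanishing on the common kernel of the `μ j` is a linear
combination of the `μ j`. -/
lemma exists_comb {s : ℕ} (χ : Cochain1 p G) (hχ : IsHom1 p χ)
    (μ : Fin s → Cochain1 p G) (hμ : ∀ j, IsHom1 p (μ j))
    (h : ∀ g : G, (∀ j, μ j g = 0) → χ g = 0) :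
    ∃ c : Fin s → ZMod p, ∀ g : G, χ g = ∑ j, c j * μ j g := by
  classical
  set M : G → (Fin s → ZMod p) := fun g j => μ j g with hM
  have hMmul : ∀ g h : G, M (g * h) = M g + M h := by
    intro g h; funext j; simp [hM, hμ j g h]
  -- range of M as an AddSubgroup
  let T : AddSubgroup (Fin s → ZMod p) :=
    { carrier := Set.range M
      zero_mem' := ⟨1, by funext j; simp [hM, hom1_one (hμ j)]⟩
      add_mem' := by rintro _ _ ⟨g, rfl⟩ ⟨k, rfl⟩; exact ⟨g * k, hMmul g k⟩
      neg_mem' := by rintro _ ⟨g, rfl⟩; exact ⟨g⁻¹, by funext j; simp [hM, hom1_inv (hμ j)]⟩ }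
  let V : Submodule (ZMod p) (Fin s → ZMod p) := AddSubgroup.toZModSubmodule p T
  -- well-definedness
  have hwd : ∀ g k : G, M g = M k → χ g = χ k := by
    intro g k hgk
    have h0 : χ (g * k⁻¹) = 0 := by
      apply h; intro j
      have : M (g * k⁻¹) = 0 := by
        rw [hMmul]; rw [hgk]
        funext j; simp [hM, hom1_inv (hμ j)]
      exact congrFun this j
    have := hχ g k⁻¹
    rw [h0, hom1_inv hχ] at this
    linear_combination -this
  -- the function on V
  have hmem : ∀ v : V, (v : Fin s → ZMod p) ∈ Set.range M := fun v => v.2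
  let f0 : V → ZMod p := fun v => χ (hmem v).choose
  have hf0 : ∀ (v : V) (g : G), M g = (v : Fin s → ZMod p) → f0 v = χ g := by
    intro v g hg
    exact hwd _ g ((hmem v).choose_spec.trans hg.symm)
  have hadd : ∀ v w : V, f0 (v + w) = f0 v + f0 w := by
    intro v w
    obtain ⟨g, hg⟩ := hmem v
    obtain ⟨k, hk⟩ := hmem w
    rw [hf0 v g hg, hf0 w k hk, hf0 (v + w) (g * k) (by rw [hMmul, hg, hk]; rfl), hχ]
  let f : V →+ ZMod p :=
    { toFun := f0
      map_zero' := by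
        have := hadd 0 0; rw [add_zero] at this; exact right_eq_add.mp this
      map_add' := hadd }
  obtain ⟨F, hF⟩ := LinearMap.exists_extend (AddMonoidHom.toZModLinearMap p f)
  refine ⟨fun j => F (Pi.single j 1), fun g => ?_⟩
  have hv : M g ∈ V := ⟨g, rfl⟩
  have h1 : χ g = F (M g) := by
    have := congrArg (fun φ => φ ⟨M g, hv⟩) hF
    simp only [LinearMap.comp_apply, Submodule.subtype_apply] at this
    rw [this]
    exact (hf0 ⟨M g, hv⟩ g rfl).symm
  rw [h1, pi_eq_sum_univ (M g), map_sum]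
  refine Finset.sum_congr rfl fun j _ => ?_
  rw [map_smul, smul_eq_mul, mul_comm]
  congr 2
  funext k
  simp [Pi.single_apply, eq_comm]

end Aux
section Key
variable {p : ℕ} [Fact p.Prime] {G : Type*} [Group G] [TopologicalSpace G] [IsTopologicalGroup G]

lemma cup_apply (χ φ : Cochain1 p G) (x : G × G) : cup p χ φ x = χ x.1 * φ x.2 := by
  simp [cup, LocallyConstant.mul_apply, LocallyConstant.coe_comap_apply]

lemma key {r s : ℕ} (χ : Fin r → Cochain1 p G) (μ : Fin s → Cochain1 p G)
    (hχ : ∀ i, IsHom1 p (χ i)) (hμ : ∀ j, IsHom1 p (μ j))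
    (h : ∀ i (g : G), (∀ j, μ j g = 0) → χ i g = 0)
    (α : Cochain2 p G)
    (hα : ∃ φ : Fin r → Cochain1 p G, (∀ i, IsHom1 p (φ i)) ∧
        ∃ b : Cochain1 p G, α = (∑ i, cup p (χ i) (φ i)) + d1 p b) :
    ∃ ψ : Fin s → Cochain1 p G, (∀ j, IsHom1 p (ψ j)) ∧
        ∃ b : Cochain1 p G, α = (∑ j, cup p (μ j) (ψ j)) + d1 p b := by
  classical
  choose c hc using fun i => exists_comb (χ i) (hχ i) μ hμ (h i)
  obtain ⟨φ, hφ, b, rfl⟩ := hα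
  refine ⟨fun j => ∑ i, c i j • φ i, ?_, b, ?_⟩
  · intro j g k
    simp only [lc_sum_apply, LocallyConstant.smul_apply, smul_eq_mul]
    rw [← Finset.sum_add_distrib]
    exact Finset.sum_congr rfl fun i _ => by rw [hφ i g k]; ring
  · congr 1
    ext x
    simp only [lc_sum_apply, cup_apply, LocallyConstant.smul_apply, smul_eq_mul]
    calc ∑ i, (χ i) x.1 * (φ i) x.2
        = ∑ i, ∑ j, c i j * (μ j) x.1 * (φ i) x.2 := by
          refine Finset.sum_congr rfl fun i _ => ?_
          rw [hc i x.1, Finset.sum_mul]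
      _ = ∑ j, (μ j) x.1 * ∑ i, c i j * (φ i) x.2 := by
          rw [Finset.sum_comm]
          refine Finset.sum_congr rfl fun j _ => ?_
          rw [Finset.mul_sum]
          exact Finset.sum_congr rfl fun i _ => by ring

end Key

/-- Let `G` be a profinite group and `χ₁, …, χᵣ, μ₁, …, μₛ` continuous
homomorphisms `G → ℤ/p` with `∩ ker χᵢ = ∩ ker μⱼ =: K`.  Then
`Σᵢ χᵢ ∪ H¹(G) = Σⱼ μⱼ ∪ H¹(G)` as subgroups of `H²(G)`; consequently the cup
product–restriction property holds for `χ₁, …, χᵣ` iff it holds for `μ₁, …, μₛ`. -/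
theorem cupRes_depends_only_on_ker (p : ℕ) [Fact p.Prime]
    (G : Type*) [Group G] [TopologicalSpace G] [IsTopologicalGroup G]
    [CompactSpace G] [TotallyDisconnectedSpace G] [T2Space G]
    (r s : ℕ) (χ : Fin r → Cochain1 p G) (μ : Fin s → Cochain1 p G)
    (hχ : ∀ i, IsHom1 p (χ i)) (hμ : ∀ j, IsHom1 p (μ j))
    (K : Subgroup G)
    (hKχ : K = ⨅ i, homKer p (χ i) (hχ i))
    (hKμ : K = ⨅ j, homKer p (μ j) (hμ j)) :
    -- the images of the two maps `Λ` agree (as subgroups of `H²(G)`) …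
    (∀ α : Cochain2 p G, IsCocycle2 p α →
      ((∃ φ : Fin r → Cochain1 p G, (∀ i, IsHom1 p (φ i)) ∧
          ∃ b : Cochain1 p G, α = (∑ i, cup p (χ i) (φ i)) + d1 p b) ↔
        (∃ ψ : Fin s → Cochain1 p G, (∀ j, IsHom1 p (ψ j)) ∧
          ∃ b : Cochain1 p G, α = (∑ j, cup p (μ j) (ψ j)) + d1 p b))) ∧
    -- … and consequently the two cup product–restriction properties are equivalent
    (CupResProperty p r χ K ↔ CupResProperty p s μ K) := by
  have hχμ : ∀ i (g : G), (∀ j, μ j g = 0) → χ i g = 0 := by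
    intro i g hg
    have hgK : g ∈ K := by rw [hKμ, Subgroup.mem_iInf]; exact hg
    have hm : g ∈ ⨅ i, homKer p (χ i) (hχ i) := hKχ ▸ hgK
    exact Subgroup.mem_iInf.mp hm i
  have hμχ : ∀ j (g : G), (∀ i, χ i g = 0) → μ j g = 0 := by
    intro j g hg
    have hgK : g ∈ K := by rw [hKχ, Subgroup.mem_iInf]; exact hg
    have hm : g ∈ ⨅ j, homKer p (μ j) (hμ j) := hKμ ▸ hgK
    exact Subgroup.mem_iInf.mp hm j
  have main : ∀ α : Cochain2 p G, IsCocycle2 p α →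
      ((∃ φ : Fin r → Cochain1 p G, (∀ i, IsHom1 p (φ i)) ∧
          ∃ b : Cochain1 p G, α = (∑ i, cup p (χ i) (φ i)) + d1 p b) ↔
        (∃ ψ : Fin s → Cochain1 p G, (∀ j, IsHom1 p (ψ j)) ∧
          ∃ b : Cochain1 p G, α = (∑ j, cup p (μ j) (ψ j)) + d1 p b)) :=
    fun α _ => ⟨key χ μ hχ hμ hχμ α, key μ χ hμ hχ hμχ α⟩
  refine ⟨main, ?_⟩
  constructor
  · intro H α hα
    rw [CupResProperty] at H
    rw [H α hα]
    exact main α hα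
  · intro H α hα
    rw [CupResProperty] at H
    rw [H α hα]
    exact (main α hα).symm
end

section
/- Let G be a profinite group and χ_1, χ_2, χ_3 ∈ H^1(G, Z/p). If the triple Massey product ⟨χ_1, χ_2, χ_3⟩ is defined (nonempty) and the cup product–restriction property holds for the pair χ_1, χ_3 (with K = ker χ_1 ∩ ker χ_3), then 0 ∈ ⟨χ_1, χ_2, χ_3⟩. -/
/-- Let `G` be a profinite group and `χ₁, χ₂, χ₃ ∈ H¹(G, ℤ/p)`.
If the triple Massey product `⟨χ₁, χ₂, χ₃⟩` is defined (nonempty) and the cup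
product–restriction property holds for the pair `χ₁, χ₃` (with
`K = ker χ₁ ∩ ker χ₃`), then `0 ∈ ⟨χ₁, χ₂, χ₃⟩`. -/
theorem massey_vanishes_of_cupRes (p : ℕ) [Fact p.Prime]
    (G : Type*) [Group G] [TopologicalSpace G] [IsTopologicalGroup G]
    [CompactSpace G] [TotallyDisconnectedSpace G] [T2Space G]
    (χ₁ χ₂ χ₃ : Cochain1 p G)
    (h₁ : IsHom1 p χ₁) (h₂ : IsHom1 p χ₂) (h₃ : IsHom1 p χ₃)
    -- the triple Massey product is defined: a defining system exists
    (hdefined : ∃ c₁₂ c₂₃ : Cochain1 p G,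
      d1 p c₁₂ = -(cup p χ₁ χ₂) ∧ d1 p c₂₃ = -(cup p χ₂ χ₃))
    -- the cup product–restriction property for `χ₁, χ₃`, where `K = ker χ₁ ∩ ker χ₃`
    (hcupres : ∀ α : Cochain2 p G, IsCocycle2 p α →
      (∃ b : Cochain1 p (homKer p χ₁ h₁ ⊓ homKer p χ₃ h₃ : Subgroup G),
          res2 p (homKer p χ₁ h₁ ⊓ homKer p χ₃ h₃) α = d1 p b) →
        ∃ β₁ β₃ : Cochain1 p G, IsHom1 p β₁ ∧ IsHom1 p β₃ ∧
          ∃ b : Cochain1 p G, α = cup p χ₁ β₁ + cup p χ₃ β₃ + d1 p b) :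
    -- conclusion: zero belongs to the triple Massey product
    ∃ c₁₂ c₂₃ b : Cochain1 p G,
      d1 p c₁₂ = -(cup p χ₁ χ₂) ∧ d1 p c₂₃ = -(cup p χ₂ χ₃) ∧
        -(cup p χ₁ c₂₃) - cup p c₁₂ χ₃ = d1 p b := by
    classical
  obtain ⟨c₁₂, c₂₃, h12, h23⟩ := hdefined
  set α : Cochain2 p G := -(cup p χ₁ c₂₃) - cup p c₁₂ χ₃ with hαdef
  have h12' : ∀ g h : G, c₁₂ g - c₁₂ (g * h) + c₁₂ h = -(χ₁ g * χ₂ h) := by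
    intro g h
    have := DFunLike.congr_fun h12 (g, h)
    simpa [d1, cup, LocallyConstant.coe_sub, LocallyConstant.coe_comap, LocallyConstant.coe_mul, LocallyConstant.coe_neg] using this
  have h23' : ∀ g h : G, c₂₃ g - c₂₃ (g * h) + c₂₃ h = -(χ₂ g * χ₃ h) := by
    intro g h
    have := DFunLike.congr_fun h23 (g, h)
    simpa [d1, cup, LocallyConstant.coe_sub, LocallyConstant.coe_comap, LocallyConstant.coe_mul, LocallyConstant.coe_neg] using this
  have hcoc : IsCocycle2 p α := by
    intro g h k
    simp only [hαdef, LocallyConstant.sub_apply, LocallyConstant.neg_apply]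
    simp only [cup, LocallyConstant.coe_mul, LocallyConstant.coe_comap,
      Pi.mul_apply, Function.comp_apply, ContinuousMap.coe_mk]
    linear_combination c₂₃ k * (h₁ g h) - c₁₂ g * (h₃ h k) - χ₃ k * (h12' g h)
      + χ₁ g * (h23' h k)
  have hres : res2 p (homKer p χ₁ h₁ ⊓ homKer p χ₃ h₃) α
      = d1 p (0 : Cochain1 p (homKer p χ₁ h₁ ⊓ homKer p χ₃ h₃ : Subgroup G)) := by
    ext x
    obtain ⟨x1, x2⟩ := x
    have hx1 : χ₁ (x1 : G) = 0 := (Subgroup.mem_inf.mp x1.2).1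
    have hx2 : χ₃ (x2 : G) = 0 := (Subgroup.mem_inf.mp x2.2).2
    simp [res2, d1, hαdef, cup, hx1, hx2, LocallyConstant.coe_comap,
      LocallyConstant.coe_mul, LocallyConstant.coe_zero, LocallyConstant.coe_sub,
      LocallyConstant.coe_neg, Function.comp]
  obtain ⟨β₁, β₃, hb₁, hb₃, b, hα⟩ := hcupres α hcoc ⟨0, hres⟩
  have hα' : ∀ g h : G,
      -(χ₁ g * c₂₃ h) - c₁₂ g * χ₃ h
        = χ₁ g * β₁ h + χ₃ g * β₃ h + (b g - b (g * h) + b h) := by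
    intro g h
    have := DFunLike.congr_fun hα (g, h)
    simpa [hαdef, d1, cup, LocallyConstant.coe_sub, LocallyConstant.coe_comap, LocallyConstant.coe_mul, LocallyConstant.coe_neg] using this
  refine ⟨c₁₂ - β₃, c₂₃ + β₁, b - χ₃ * β₃, ?_, ?_, ?_⟩
  · ext x
    obtain ⟨g, h⟩ := x
    simp only [d1, cup, LocallyConstant.coe_sub, LocallyConstant.coe_add,
      LocallyConstant.coe_neg, LocallyConstant.coe_mul, LocallyConstant.coe_comap,
      Pi.sub_apply, Pi.add_apply, Pi.neg_apply, Pi.mul_apply,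
      Function.comp_apply, ContinuousMap.coe_mk]
    linear_combination h12' g h + hb₃ g h
  · ext x
    obtain ⟨g, h⟩ := x
    simp only [d1, cup, LocallyConstant.coe_sub, LocallyConstant.coe_add,
      LocallyConstant.coe_neg, LocallyConstant.coe_mul, LocallyConstant.coe_comap,
      Pi.sub_apply, Pi.add_apply, Pi.neg_apply, Pi.mul_apply,
      Function.comp_apply, ContinuousMap.coe_mk]
    linear_combination h23' g h - hb₁ g h
  · ext x
    obtain ⟨g, h⟩ := x
    simp only [d1, cup, LocallyConstant.coe_sub, LocallyConstant.coe_add,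
      LocallyConstant.coe_neg, LocallyConstant.coe_mul, LocallyConstant.coe_comap,
      Pi.sub_apply, Pi.add_apply, Pi.neg_apply, Pi.mul_apply,
      Function.comp_apply, ContinuousMap.coe_mk]
    linear_combination hα' g h - β₃ (g * h) * h₃ g h - (χ₃ g + χ₃ h) * hb₃ g h
end

section
/- Given an array (c_{ij})_{1≤i≤j≤n} of continuous 1-cochains on a profinite group G with values in Z/p, define γ : G → U_{n+1}(F_p) by γ(σ)_{i,j} = (−1)^{j−i} c_{i,j−1}(σ) for 1 ≤ i < j ≤ n+1 (and 1's on the diagonal). Then γ is a group homomorphism if and only if ∂c_{ij} = −Σ_{r=i}^{j−1} c_{ir} c_{r+1,j} for all 1 ≤ i ≤ j ≤ n. -/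
section DCAux
set_option linter.unusedSectionVars false
variable {p : ℕ} {G : Type*} [Group G] [TopologicalSpace G] [IsTopologicalGroup G]

lemma dc_sum_apply {X Y ι : Type*} [TopologicalSpace X] [AddCommMonoid Y]
    (s : Finset ι) (f : ι → LocallyConstant X Y) (x : X) :
    (∑ i ∈ s, f i) x = ∑ i ∈ s, f i x := by
  classical
  induction s using Finset.cons_induction with
  | empty => simp
  | cons a s ha ih => rw [Finset.sum_cons, Finset.sum_cons, LocallyConstant.add_apply, ih]

lemma dc_d1_apply (c : Cochain1 p G) (σ τ : G) :
    d1 p c (σ, τ) = c σ - c (σ * τ) + c τ := by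
  simp [d1, LocallyConstant.sub_apply, LocallyConstant.add_apply]

lemma dc_cup_apply (χ φ : Cochain1 p G) (σ τ : G) :
    cup p χ φ (σ, τ) = χ σ * φ τ := by
  simp [cup]

lemma dc_d1_eq_iff (a b : ℕ) (c : ℕ → ℕ → Cochain1 p G) :
    (d1 p (c a b) = -∑ r ∈ Finset.Ico a b, cup p (c a r) (c (r + 1) b)) ↔
    ∀ σ τ : G, c a b (σ * τ) = c a b σ + c a b τ +
      ∑ r ∈ Finset.Ico a b, c a r σ * c (r + 1) b τ := by
  rw [LocallyConstant.ext_iff]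
  rw [Prod.forall]
  constructor
  · intro h σ τ
    have h2 := h σ τ
    rw [dc_d1_apply, LocallyConstant.neg_apply, dc_sum_apply] at h2
    simp only [dc_cup_apply] at h2
    linear_combination -h2
  · intro h σ τ
    rw [dc_d1_apply, LocallyConstant.neg_apply, dc_sum_apply]
    simp only [dc_cup_apply]
    linear_combination -(h σ τ)

end DCAux

/-- Given an array `(c_{ij})` of continuous 1-cochains on a profinite
group `G` with values in `ℤ/p`, the map `γ : G → U_{n+1}(𝔽_p)` defined by
`γ(σ)_{ij} = (−1)^{j−i} c_{i,j−1}(σ)` for `i < j` (with 1's on the diagonal) is a group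
homomorphism if and only if `∂c_{ij} = −Σ_{r=i}^{j−1} c_{ir} c_{r+1,j}` for all
`1 ≤ i ≤ j ≤ n`. -/
theorem dwyer_correspondence (p : ℕ) [Fact p.Prime]
    (G : Type*) [Group G] [TopologicalSpace G] [IsTopologicalGroup G]
    [CompactSpace G] [TotallyDisconnectedSpace G] [T2Space G]
    (n : ℕ) (hn : 2 ≤ n) (c : ℕ → ℕ → Cochain1 p G)
    -- the associated map `γ : G → U_{n+1}(𝔽_p)`
    (γ : G → Matrix (Fin (n + 1)) (Fin (n + 1)) (ZMod p))
    (hγ : ∀ (σ : G) (i j : Fin (n + 1)), γ σ i j =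
      if (i : ℕ) = (j : ℕ) then 1
      else if (i : ℕ) < (j : ℕ) then
        (-1 : ZMod p) ^ ((j : ℕ) - (i : ℕ)) * c ((i : ℕ) + 1) (j : ℕ) σ
      else 0) :
    (∀ σ τ : G, γ (σ * τ) = γ σ * γ τ) ↔
      (∀ i j : ℕ, 1 ≤ i → i ≤ j → j ≤ n →
        d1 p (c i j) = -∑ r ∈ Finset.Ico i j, cup p (c i r) (c (r + 1) j)) := by
  have hne : ((-1 : ZMod p)) ≠ 0 := neg_ne_zero.mpr one_ne_zero
  -- the key entry formula for the product
  have hmul : ∀ (σ τ : G) (i j : Fin (n + 1)), (γ σ * γ τ) i j =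
      if (i : ℕ) = (j : ℕ) then 1
      else if (i : ℕ) < (j : ℕ) then
        (-1 : ZMod p) ^ ((j : ℕ) - (i : ℕ)) *
          (c ((i : ℕ) + 1) (j : ℕ) σ + c ((i : ℕ) + 1) (j : ℕ) τ +
            ∑ r ∈ Finset.Ico ((i : ℕ) + 1) (j : ℕ),
              c ((i : ℕ) + 1) r σ * c (r + 1) (j : ℕ) τ)
      else 0 := by
    intro σ τ i j
    rw [Matrix.mul_apply]
    simp only [hγ]
    rw [Fin.sum_univ_eq_sum_range (fun k =>
      (if (i : ℕ) = k then 1 else if (i : ℕ) < k then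
        (-1 : ZMod p) ^ (k - (i : ℕ)) * c ((i : ℕ) + 1) k σ else 0) *
      (if k = (j : ℕ) then 1 else if k < (j : ℕ) then
        (-1 : ZMod p) ^ ((j : ℕ) - k) * c (k + 1) (j : ℕ) τ else 0))]
    set a := (i : ℕ) with hadef
    set b := (j : ℕ) with hbdef
    have hbn : b < n + 1 := j.isLt
    rcases lt_trichotomy a b with hab | hab | hab
    · -- a < b
      rw [if_neg (by omega), if_pos hab]
      rw [← Finset.sum_subset (show Finset.Ico a (b + 1) ⊆ Finset.range (n + 1) by
            intro k hk; simp only [Finset.mem_Ico] at hk; simp only [Finset.mem_range]; omega)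
          (by
            intro k _ hk
            simp only [Finset.mem_Ico, not_and, not_lt] at hk
            by_cases hka : k < a
            · rw [if_neg (by omega), if_neg (by omega), zero_mul]
            · have hkb : b < k := by omega
              rw [if_neg (show ¬ k = b by omega), if_neg (show ¬ k < b by omega), mul_zero])]
      rw [Finset.sum_Ico_succ_top (by omega : a ≤ b)]
      rw [Finset.sum_eq_sum_Ico_succ_bot hab]
      rw [if_pos rfl, if_neg (by omega : ¬ a = b), if_pos hab, one_mul]
      rw [if_neg (by omega : ¬ a = b), if_pos hab, if_pos rfl, mul_one]
      have hsum : ∑ k ∈ Finset.Ico (a + 1) b,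
          ((if a = k then 1 else if a < k then
            (-1 : ZMod p) ^ (k - a) * c (a + 1) k σ else 0) *
          (if k = b then 1 else if k < b then
            (-1 : ZMod p) ^ (b - k) * c (k + 1) b τ else 0)) =
          ∑ k ∈ Finset.Ico (a + 1) b,
            (-1 : ZMod p) ^ (b - a) * (c (a + 1) k σ * c (k + 1) b τ) := by
        refine Finset.sum_congr rfl ?_
        intro k hk
        simp only [Finset.mem_Ico] at hk
        rw [if_neg (by omega), if_pos (by omega), if_neg (by omega), if_pos (by omega)]
        have he : (k - a) + (b - k) = b - a := by omega
        rw [← he, pow_add]; ring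
      rw [hsum, ← Finset.mul_sum]
      ring
    · -- a = b
      rw [if_pos hab]
      rw [Finset.sum_eq_single a]
      · rw [if_pos rfl, if_pos (by omega), one_mul]
      · intro k _ hk
        by_cases hka : k < a
        · rw [if_neg (by omega), if_neg (by omega), zero_mul]
        · rw [if_neg (show ¬ k = b by omega), if_neg (show ¬ k < b by omega), mul_zero]
      · intro h; exact absurd (Finset.mem_range.mpr (by omega)) h
    · -- b < a
      rw [if_neg (by omega), if_neg (by omega)]
      refine Finset.sum_eq_zero ?_
      intro k _
      by_cases hka : k < a
      · rw [if_neg (by omega), if_neg (by omega), zero_mul]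
      · rw [if_neg (show ¬ k = b by omega), if_neg (show ¬ k < b by omega), mul_zero]
  constructor
  · intro h a b ha hab hbn
    rw [dc_d1_eq_iff]
    intro σ τ
    set i : Fin (n + 1) := ⟨a - 1, by omega⟩ with hi
    set j : Fin (n + 1) := ⟨b, by omega⟩ with hj
    have h2 : γ (σ * τ) i j = (γ σ * γ τ) i j := by rw [h σ τ]
    rw [hγ, hmul] at h2
    have hiv : (i : ℕ) = a - 1 := rfl
    have hjv : (j : ℕ) = b := rfl
    rw [hiv, hjv] at h2
    rw [if_neg (by omega : ¬ a - 1 = b), if_neg (by omega : ¬ a - 1 = b),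
      if_pos (by omega : a - 1 < b), if_pos (by omega : a - 1 < b)] at h2
    rw [show a - 1 + 1 = a by omega] at h2
    exact mul_left_cancel₀ (pow_ne_zero _ hne) h2
  · intro h σ τ
    ext i j
    rw [hmul, hγ]
    by_cases h1 : (i : ℕ) = (j : ℕ)
    · rw [if_pos h1, if_pos h1]
    by_cases h2 : (i : ℕ) < (j : ℕ)
    · rw [if_neg h1, if_pos h2, if_neg h1, if_pos h2]
      have hR := (dc_d1_eq_iff ((i : ℕ) + 1) (j : ℕ) c).mp
        (h ((i : ℕ) + 1) (j : ℕ) (by omega) (by omega) (by omega)) σ τ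
      rw [hR]
    · rw [if_neg h1, if_neg h2, if_neg h1, if_neg h2]
end
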